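/- For every r > 0 and ω > 0, the set PSAP_{ω,r}(X) is a closed subspace of C_b([0,∞),X) with respect to the norm of uniform convergence; in particular, if a sequence (u_n) in PSAP_{ω,r}(X) converges uniformly on [0,∞) to u ∈ C_b([0,∞),X), then u ∈ PSAP_{ω,r}(X). -/

import Mathlib

open MeasureTheory Filter Set

/-- `u ∈ PSAP_{ω,r}(X)`: pseudo S-asymptotically ω-periodic of class r. -/
def PSAPclass {X : Type*} [NormedAddCommGroup X] (ω r : ℝ) (u : ℝ → X) : Prop :=
  Tendsto (fun T : ℝ => (1 / T) * ∫ s in r..T, ⨆ τ ∈ Set.Icc (s - r) s, ‖u (τ + ω) - u τ‖)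
    atTop (nhds 0)

noncomputable def Phi (g : ℝ → ℝ) (r s : ℝ) : ℝ := ⨆ τ ∈ Set.Icc (s - r) s, g τ

lemma Phi_nonneg {g : ℝ → ℝ} {r s : ℝ} (h : ∀ τ ∈ Set.Icc (s - r) s, 0 ≤ g τ) :
    0 ≤ Phi g r s :=
  Real.iSup_nonneg fun τ => Real.iSup_nonneg fun hτ => h τ hτ

lemma le_Phi {g : ℝ → ℝ} {r s M : ℝ} (hM : ∀ τ ∈ Set.Icc (s - r) s, g τ ≤ M)
    {τ0 : ℝ} (hτ0 : τ0 ∈ Set.Icc (s - r) s) : g τ0 ≤ Phi g r s := by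
  have hb : BddAbove (Set.range fun τ => ⨆ _ : τ ∈ Set.Icc (s - r) s, g τ) := by
    refine ⟨max M 0, ?_⟩
    rintro x ⟨τ, rfl⟩
    exact Real.iSup_le (fun hτ => (hM τ hτ).trans (le_max_left _ _)) (le_max_right _ _)
  haveI : Nonempty (τ0 ∈ Set.Icc (s - r) s) := ⟨hτ0⟩
  calc g τ0 = ⨆ _ : τ0 ∈ Set.Icc (s - r) s, g τ0 := (ciSup_const).symm
    _ ≤ Phi g r s := le_ciSup hb τ0

lemma Phi_continuousOn {g : ℝ → ℝ} (hg : ContinuousOn g (Set.Ici 0))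
    (hg0 : ∀ t ∈ Set.Ici (0:ℝ), 0 ≤ g t) {r : ℝ} (hr : 0 < r) :
    ContinuousOn (Phi g r) (Set.Ici r) := by
  rw [Metric.continuousOn_iff]
  intro s0 hs0 ε hε
  have hs0r : r ≤ s0 := hs0
  set T : ℝ := s0 + 1 with hT
  have hT0 : (0:ℝ) ≤ T := by simp only [hT]; linarith
  have hK : IsCompact (Set.Icc (0:ℝ) T) := isCompact_Icc
  have hgK : ContinuousOn g (Set.Icc 0 T) := hg.mono Set.Icc_subset_Ici_self
  -- uniform continuity on the compact [0, T]
  have huc : UniformContinuousOn g (Set.Icc 0 T) :=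
    hK.uniformContinuousOn_of_continuous hgK
  obtain ⟨δ', hδ'pos, hδ'⟩ := (Metric.uniformContinuousOn_iff.1 huc) (ε/2) (by linarith)
  -- bound for g on [0, T]
  obtain ⟨Mb, hMb⟩ : ∃ M, ∀ t ∈ Set.Icc (0:ℝ) T, g t ≤ M := by
    obtain ⟨x, -, hx⟩ := hK.exists_isMaxOn ⟨0, by constructor <;> linarith⟩ hgK
    exact ⟨g x, hx⟩
  -- key one-sided estimate
  have key : ∀ a b : ℝ, r ≤ a → r ≤ b → a ≤ T → b ≤ T → |a - b| < δ' →
      Phi g r a ≤ Phi g r b + ε/2 := by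
    intro a b ha hb haT hbT hab
    have hΦb0 : 0 ≤ Phi g r b :=
      Phi_nonneg fun τ hτ => hg0 τ (by have := hτ.1; simp only [Set.mem_Ici]; linarith)
    refine Real.iSup_le (fun τ => Real.iSup_le (fun hτ => ?_) (by linarith)) (by linarith)
    obtain ⟨hτ1, hτ2⟩ := hτ
    set τ' : ℝ := max (b - r) (min τ b) with hτ'def
    have hτ'1 : b - r ≤ τ' := le_max_left _ _
    have hτ'2 : τ' ≤ b := max_le (by linarith) (min_le_right _ _)
    have hτ'mem : τ' ∈ Set.Icc (b - r) b := ⟨hτ'1, hτ'2⟩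
    have hτT : τ ∈ Set.Icc (0:ℝ) T := ⟨by linarith, by linarith⟩
    have hτ'T : τ' ∈ Set.Icc (0:ℝ) T := ⟨by linarith, by linarith⟩
    have habs := abs_lt.1 hab
    have hdist : |τ - τ'| < δ' := by
      rcases lt_or_ge τ (b - r) with h1 | h1
      · have hmin : min τ b = τ := min_eq_left (by linarith)
        have : τ' = b - r := by rw [hτ'def, hmin, max_eq_left (by linarith)]
        rw [this, abs_lt]; constructor <;> linarith
      · rcases le_total τ b with h2 | h2
        · have : τ' = τ := by rw [hτ'def, min_eq_left h2, max_eq_right h1]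
          rw [this]; simpa using hδ'pos
        · have : τ' = b := by rw [hτ'def, min_eq_right h2, max_eq_right (by linarith)]
          rw [this, abs_lt]; constructor <;> linarith
    have hgc : g τ - g τ' ≤ ε/2 := by
      have := hδ' τ hτT τ' hτ'T (by rwa [Real.dist_eq])
      rw [Real.dist_eq] at this
      have := abs_lt.1 this
      linarith [this.1, this.2]
    have hle : g τ' ≤ Phi g r b :=
      le_Phi (fun t ht => hMb t ⟨by linarith [ht.1], by linarith [ht.2]⟩) hτ'mem
    linarith
  refine ⟨min δ' 1, by positivity, fun s' hs' hd => ?_⟩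
  have hd' : |s' - s0| < min δ' 1 := by rwa [Real.dist_eq] at hd
  have h1 : |s' - s0| < δ' := lt_of_lt_of_le hd' (min_le_left _ _)
  have h2 : |s' - s0| < 1 := lt_of_lt_of_le hd' (min_le_right _ _)
  have habs := abs_lt.1 h2
  have hs'T : s' ≤ T := by simp only [hT]; linarith
  have hs0T : s0 ≤ T := by simp only [hT]; linarith
  have k1 := key s' s0 hs' hs0 hs'T hs0T h1
  have k2 := key s0 s' hs0 hs' hs0T hs'T (by rw [abs_sub_comm]; exact h1)
  rw [Real.dist_eq, abs_lt]
  constructor <;> linarith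

lemma Phi_le {g : ℝ → ℝ} {r s M : ℝ} (hM : 0 ≤ M) (h : ∀ τ ∈ Set.Icc (s - r) s, g τ ≤ M) :
    Phi g r s ≤ M :=
  Real.iSup_le (fun τ => Real.iSup_le (fun hτ => h τ hτ) hM) hM

/-- `PSAP_{ω,r}(X)` is closed in `C_b([0,∞),X)` under uniform convergence. -/
theorem psapClass_closed {X : Type*} [NormedAddCommGroup X]
    (r ω : ℝ) (hr : 0 < r) (hω : 0 < ω)
    (u : ℕ → ℝ → X) (v : ℝ → X)
    (hucont : ∀ n, ContinuousOn (u n) (Set.Ici 0))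
    (hubdd : ∀ n, ∃ B, ∀ t ≥ (0:ℝ), ‖u n t‖ ≤ B)
    (huP : ∀ n, PSAPclass ω r (u n))
    (hvcont : ContinuousOn v (Set.Ici 0))
    (hvbdd : ∃ B, ∀ t ≥ (0:ℝ), ‖v t‖ ≤ B)
    (hconv : TendstoUniformlyOn u v atTop (Set.Ici 0)) :
    PSAPclass ω r v := by
  -- difference functions
  set Gv : ℝ → ℝ := fun τ => ‖v (τ + ω) - v τ‖ with hGv
  have hGvcont : ContinuousOn Gv (Set.Ici 0) := by
    have hshift : ContinuousOn (fun τ : ℝ => v (τ + ω)) (Set.Ici 0) := by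
      refine hvcont.comp (by fun_prop) ?_
      intro t ht
      simp only [Set.mem_Ici] at *
      linarith
    exact (hshift.sub hvcont).norm
  have hGv0 : ∀ t ∈ Set.Ici (0:ℝ), 0 ≤ Gv t := fun t _ => norm_nonneg _
  rw [PSAPclass, Metric.tendsto_nhds]
  intro ε hε
  -- choose a good approximant
  have := (Metric.tendstoUniformlyOn_iff.1 hconv (ε/8) (by positivity)).exists
  obtain ⟨N, hN⟩ := this
  set G : ℝ → ℝ := fun τ => ‖u N (τ + ω) - u N τ‖ with hG
  obtain ⟨B, hB⟩ := hubdd N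
  -- pointwise comparison for τ ≥ 0
  have hpt : ∀ τ ≥ (0:ℝ), Gv τ ≤ G τ + ε/4 := by
    intro τ hτ
    have h1 := hN (τ + ω) (by simp only [Set.mem_Ici]; linarith)
    have h2 := hN τ (by simpa using hτ)
    rw [dist_eq_norm] at h1 h2
    have : v (τ + ω) - v τ = (u N (τ + ω) - u N τ) + ((v (τ + ω) - u N (τ + ω)) - (v τ - u N τ)) := by abel
    calc Gv τ = ‖(u N (τ + ω) - u N τ) + ((v (τ + ω) - u N (τ + ω)) - (v τ - u N τ))‖ := by
          rw [hGv]; simp only []; rw [this]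
      _ ≤ ‖u N (τ + ω) - u N τ‖ + ‖(v (τ + ω) - u N (τ + ω)) - (v τ - u N τ)‖ := norm_add_le _ _
      _ ≤ G τ + (‖v (τ + ω) - u N (τ + ω)‖ + ‖v τ - u N τ‖) := by
          refine add_le_add le_rfl (norm_sub_le _ _)
      _ ≤ G τ + ε/4 := by linarith
  -- sup comparison for s ≥ r
  have hGbd : ∀ s : ℝ, r ≤ s → ∀ t ∈ Set.Icc (s - r) s, G t ≤ 2 * B := by
    intro s hs t ht
    have ht0 : (0:ℝ) ≤ t := by linarith [ht.1]
    calc G t ≤ ‖u N (t + ω)‖ + ‖u N t‖ := norm_sub_le _ _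
      _ ≤ 2 * B := by linarith [hB (t + ω) (by linarith), hB t ht0]
  have hsup : ∀ s : ℝ, r ≤ s → Phi Gv r s ≤ Phi G r s + ε/4 := by
    intro s hs
    have hΦG0 : 0 ≤ Phi G r s :=
      Phi_nonneg fun τ _ => norm_nonneg _
    refine Phi_le (by linarith) fun τ hτ => ?_
    have hτ0 : (0:ℝ) ≤ τ := by linarith [hτ.1]
    have := le_Phi (hGbd s hs) hτ
    linarith [hpt τ hτ0]
  -- integrability of Phi G on intervals
  have hGcont : ContinuousOn G (Set.Ici 0) := by
    have hshift : ContinuousOn (fun τ : ℝ => u N (τ + ω)) (Set.Ici 0) := by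
      refine (hucont N).comp (by fun_prop) ?_
      intro t ht
      simp only [Set.mem_Ici] at *
      linarith
    exact (hshift.sub (hucont N)).norm
  have hΦGcont : ContinuousOn (Phi G r) (Set.Ici r) :=
    Phi_continuousOn hGcont (fun t _ => norm_nonneg _) hr
  -- use convergence of the N-th averages
  have hNlim := Metric.tendsto_nhds.1 (huP N) (ε/2) (by positivity)
  filter_upwards [hNlim, eventually_ge_atTop (max r 1)] with T hT1 hT2
  have hrT : r ≤ T := le_trans (le_max_left _ _) hT2
  have hT0 : (0:ℝ) < T := lt_of_lt_of_le one_pos (le_trans (le_max_right _ _) hT2)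
  have hΦGint : IntervalIntegrable (Phi G r) volume r T := by
    apply ContinuousOn.intervalIntegrable
    refine hΦGcont.mono ?_
    rw [Set.uIcc_of_le hrT]
    exact fun x hx => hx.1
  have hFv0 : 0 ≤ (1 / T) * ∫ s in r..T, Phi Gv r s := by
    refine mul_nonneg (by positivity) ?_
    refine intervalIntegral.integral_nonneg hrT fun s hs => ?_
    exact Phi_nonneg fun τ _ => norm_nonneg _
  have step1 : (∫ s in r..T, Phi Gv r s) ≤ ∫ s in r..T, (Phi G r s + ε/4) := by
    rw [intervalIntegral.integral_of_le hrT, intervalIntegral.integral_of_le hrT]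
    refine integral_mono_of_nonneg ?_ ?_ ?_
    · refine (ae_restrict_iff' measurableSet_Ioc).2 (Eventually.of_forall fun s hs => ?_)
      exact Phi_nonneg fun τ _ => norm_nonneg _
    · exact hΦGint.1.add (integrableOn_const measure_Ioc_lt_top.ne)
    · refine (ae_restrict_iff' measurableSet_Ioc).2 (Eventually.of_forall fun s hs => ?_)
      exact hsup s (le_of_lt hs.1)
  have step2 : (∫ s in r..T, (Phi G r s + ε/4)) = (∫ s in r..T, Phi G r s) + ε/4 * (T - r) := by
    rw [intervalIntegral.integral_add hΦGint intervalIntegrable_const,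
      intervalIntegral.integral_const, smul_eq_mul]
    ring
  have hFuN : (1 / T) * (∫ s in r..T, Phi G r s) < ε/2 := by
    rw [Real.dist_eq, sub_zero] at hT1
    calc (1 / T) * (∫ s in r..T, Phi G r s) ≤ |(1 / T) * ∫ s in r..T, Phi G r s| := le_abs_self _
      _ < ε/2 := hT1
  have hfrac : (1 / T) * (ε/4 * (T - r)) ≤ ε/4 := by
    have h1 : (1 / T) * (T - r) ≤ 1 := by
      rw [one_div, inv_mul_le_iff₀ hT0]
      linarith
    have : (1 / T) * (ε/4 * (T - r)) = ε/4 * ((1 / T) * (T - r)) := by ring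
    rw [this]
    nlinarith
  have hFvle : (1 / T) * ∫ s in r..T, Phi Gv r s < ε := by
    calc (1 / T) * ∫ s in r..T, Phi Gv r s
        ≤ (1 / T) * ((∫ s in r..T, Phi G r s) + ε/4 * (T - r)) := by
          refine mul_le_mul_of_nonneg_left ?_ (by positivity)
          rw [← step2]; exact step1
      _ = (1 / T) * (∫ s in r..T, Phi G r s) + (1 / T) * (ε/4 * (T - r)) := by ring
      _ < ε/2 + ε/4 := by linarith
      _ < ε := by linarith
  rw [Real.dist_eq, sub_zero]
  calc |(1 / T) * ∫ s in r..T, ⨆ τ ∈ Set.Icc (s - r) s, ‖v (τ + ω) - v τ‖|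
      = (1 / T) * ∫ s in r..T, Phi Gv r s := abs_of_nonneg hFv0
    _ < ε := hFvle
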